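/- Let R be a UFD with field of fractions K, and let f(x) = a_d x^d + ... + a_0 ∈ K[x] with a_d a_0 ≠ 0, where the coefficients a_j for j ≠ i are fixed (for some fixed i with 0 < i < d). Then there is a finite set {y_1, ..., y_m} ⊆ K, independent of the choice of a_i ∈ R, such that any root z ∈ K of f satisfies z = u·y_j for some j and some unit u of R. -/

import Mathlib

open UniqueFactorizationMonoid in
lemma finite_normalized_dvd {R : Type*} [CommMonoidWithZero R]
    [UniqueFactorizationMonoid R] [StrongNormalizationMonoid R] {e : R} (he : e ≠ 0) :
    {x : R | x ∣ e ∧ normalize x = x}.Finite := by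
  classical
  have hsub : {x : R | x ∣ e ∧ normalize x = x} ⊆
      (fun s : Multiset R => s.prod) '' ((normalizedFactors e).powerset.toFinset : Set (Multiset R)) := by
    rintro x ⟨hdvd, hnorm⟩
    have hx0 : x ≠ 0 := fun h => he (by simpa [h] using hdvd)
    refine ⟨normalizedFactors x, ?_, ?_⟩
    · rw [Finset.mem_coe, Multiset.mem_toFinset, Multiset.mem_powerset]
      exact (dvd_iff_normalizedFactors_le_normalizedFactors hx0 he).mp hdvd
    · have h1 : Associated (normalizedFactors x).prod x := prod_normalizedFactors hx0
      have h2 : normalize (normalizedFactors x).prod = (normalizedFactors x).prod := by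
        rw [show (normalize ((normalizedFactors x).prod) : R) =
            ((normalizedFactors x).map (fun y => normalize y)).prod from
          map_multiset_prod (normalizeHom : R →*₀ R) _]
        have h3 : (normalizedFactors x).map (fun y : R => normalize y)
            = (normalizedFactors x).map id :=
          Multiset.map_congr rfl fun y hy => normalize_normalized_factor y hy
        rw [h3, Multiset.map_id]
      calc (normalizedFactors x).prod = normalize (normalizedFactors x).prod := h2.symm
        _ = normalize x := normalize_eq_normalize h1.dvd h1.symm.dvd
        _ = x := hnorm
  exact (((normalizedFactors e).powerset.toFinset.finite_toSet).image _).subset hsub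

theorem stmt_4 (R : Type*) [CommRing R] [IsDomain R] [UniqueFactorizationMonoid R]
    (K : Type*) [Field K] [Algebra R K] [IsFractionRing R K]
    (d i : ℕ) (hi0 : 0 < i) (hid : i < d)
    (a : ℕ → K) (h0 : a 0 ≠ 0) (hdd : a d ≠ 0) :
    ∃ Y : Finset K, ∀ c : R, ∀ z : K,
      (∑ j ∈ Finset.range (d + 1), Function.update a i (algebraMap R K c) j * z ^ j = 0) →
      ∃ y ∈ Y, ∃ u : Rˣ, z = algebraMap R K (u : R) * y := by
  classical
  letI : StrongNormalizationMonoid R := UniqueFactorizationMonoid.normalizationMonoid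
  have hinj := IsFractionRing.injective R K
  -- common denominator
  obtain ⟨b, hb⟩ := IsLocalization.exist_integer_multiples (nonZeroDivisors R)
    (Finset.range (d + 1)) a
  have hbK : algebraMap R K (b : R) ≠ 0 :=
    IsFractionRing.to_map_ne_zero_of_mem_nonZeroDivisors b.2
  choose! r hr using fun j (hj : j ∈ Finset.range (d + 1)) => hb j hj
  have h0d : 0 ∈ Finset.range (d + 1) := by simp
  have hdd' : d ∈ Finset.range (d + 1) := by simp
  have hr0 : r 0 ≠ 0 := by
    intro h
    apply mul_ne_zero hbK h0
    rw [← Algebra.smul_def, ← hr 0 h0d, h, map_zero]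
  have hrd : r d ≠ 0 := by
    intro h
    apply mul_ne_zero hbK hdd
    rw [← Algebra.smul_def, ← hr d hdd', h, map_zero]
  refine ⟨Finset.image (fun p : R × R => algebraMap R K p.1 / algebraMap R K p.2)
    ((finite_normalized_dvd hr0).toFinset ×ˢ (finite_normalized_dvd hrd).toFinset), ?_⟩
  intro c z hz
  set a' := Function.update a i (algebraMap R K c) with ha'
  set s : ℕ → R := fun j => if j = i then (b : R) * c else r j with hs
  have hs_map : ∀ j ∈ Finset.range (d + 1), algebraMap R K (s j) = algebraMap R K (b : R) * a' j := by
    intro j hj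
    by_cases h : j = i
    · subst h
      simp [hs, ha', map_mul]
    · rw [hs]
      simp only [if_neg h]
      rw [ha', Function.update_of_ne h, ← Algebra.smul_def, ← hr j hj]
  set p : Polynomial R := ∑ j ∈ Finset.range (d + 1), Polynomial.monomial j (s j) with hp
  have hcoeff : ∀ k, p.coeff k = if k ∈ Finset.range (d + 1) then s k else 0 := by
    intro k
    rw [hp, Polynomial.finset_sum_coeff]
    simp only [Polynomial.coeff_monomial]
    rw [Finset.sum_ite_eq' (Finset.range (d + 1)) k s]
  have haeval : Polynomial.aeval z p = 0 := by
    rw [hp, map_sum]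
    have : ∀ j ∈ Finset.range (d + 1),
        Polynomial.aeval z (Polynomial.monomial j (s j)) =
          algebraMap R K (b : R) * (a' j * z ^ j) := by
      intro j hj
      rw [Polynomial.aeval_monomial, hs_map j hj, mul_assoc]
    rw [Finset.sum_congr rfl this, ← Finset.mul_sum, hz, mul_zero]
  -- identify coeff 0 and leading coefficient
  have hi0' : (0 : ℕ) ≠ i := fun h => hi0.ne h
  have hid' : d ≠ i := fun h => (lt_irrefl d (h ▸ hid))
  have hc0 : p.coeff 0 = r 0 := by rw [hcoeff 0, if_pos h0d, hs]; simp [hi0']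
  have hcd : p.coeff d = r d := by rw [hcoeff d, if_pos hdd', hs]; simp [hid']
  have hdeg : p.natDegree = d := by
    apply le_antisymm
    · apply Polynomial.natDegree_le_iff_coeff_eq_zero.mpr
      intro k hk
      rw [hcoeff k, if_neg (by simp; omega)]
    · exact Polynomial.le_natDegree_of_ne_zero (hcd ▸ hrd)
  have hlead : p.leadingCoeff = r d := by
    rw [Polynomial.leadingCoeff, hdeg, hcd]
  have hnum : IsFractionRing.num R z ∣ r 0 := hc0 ▸ num_dvd_of_is_root haeval
  have hden : (IsFractionRing.den R z : R) ∣ r d := hlead ▸ den_dvd_of_is_root haeval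
  set n := IsFractionRing.num R z with hn
  set dn := (IsFractionRing.den R z : R) with hdn
  have hdn0 : dn ≠ 0 := nonZeroDivisors.coe_ne_zero _
  have hDnz : algebraMap R K (normalize dn) ≠ 0 := by
    rw [map_ne_zero_iff _ hinj]
    simpa [normalize_eq_zero] using hdn0
  refine ⟨algebraMap R K (normalize n) / algebraMap R K (normalize dn), ?_,
    normUnit dn * (normUnit n)⁻¹, ?_⟩
  · refine Finset.mem_image.mpr ⟨(normalize n, normalize dn), Finset.mem_product.mpr ⟨?_, ?_⟩, rfl⟩
    · rw [Set.Finite.mem_toFinset]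
      exact ⟨(normalize_dvd_iff).mpr hnum, normalize_idem n⟩
    · rw [Set.Finite.mem_toFinset]
      exact ⟨(normalize_dvd_iff).mpr hden, normalize_idem dn⟩
  · have hz_eq : algebraMap R K n / algebraMap R K dn = z := IsFractionRing.mk'_num_den' R z
    have hdnK : algebraMap R K dn ≠ 0 := by rwa [map_ne_zero_iff _ hinj]
    have hNn : algebraMap R K (normalize n) = algebraMap R K n * algebraMap R K (normUnit n : R) := by
      rw [← map_mul, normalize_apply]
    have hNd : algebraMap R K (normalize dn) = algebraMap R K dn * algebraMap R K (normUnit dn : R) := by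
      rw [← map_mul, normalize_apply]
    obtain ⟨vN, hvN⟩ : ∃ v : R, (((normUnit n)⁻¹ : Rˣ) : R) = v := ⟨_, rfl⟩
    have huN : algebraMap R K vN * algebraMap R K (normUnit n : R) = 1 := by
      rw [← hvN, ← map_mul, Units.inv_mul, map_one]
    rw [← hz_eq, Units.val_mul, map_mul, hvN, hNn, hNd]
    field_simp
    linear_combination (-(algebraMap R K n)) * huN
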